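/- Let Σ_k and Σ_m be real n×n positive semidefinite matrices with range(Σ_k) = range(Σ_m), and let Φ be a real ℓ×n matrix such that rank(Σ_m^{1/2}·Φᵀ·Φ·Σ_m^{1/2}) = rank(Σ_m). For σ² > 0 define W_m(σ²) := Σ_m·Φᵀ·(σ²·I_ℓ + Φ·Σ_m·Φᵀ)⁻¹. Then lim_{σ²→0⁺} tr(W_m(σ²)·(σ²·I_ℓ + Φ·Σ_k·Φᵀ)·W_m(σ²)ᵀ) = tr(Σ_k). -/

import Mathlib

open Matrix Filter Topology

noncomputable def Matrix.PosSemidef.sqrt {n : Type*} [Fintype n] [DecidableEq n]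
    {A : Matrix n n ℝ} (hA : A.PosSemidef) : Matrix n n ℝ :=
  (hA.1.eigenvectorUnitary : Matrix n n ℝ) * diagonal ((↑) ∘ (√·) ∘ hA.1.eigenvalues : n → ℝ) *
    (star hA.1.eigenvectorUnitary : Matrix n n ℝ)

lemma Matrix.PosSemidef.posSemidef_sqrt {n : ℕ} {A : Matrix (Fin n) (Fin n) ℝ}
    (hA : A.PosSemidef) : hA.sqrt.PosSemidef := by
  unfold Matrix.PosSemidef.sqrt
  rw [star_eq_conjTranspose]
  apply Matrix.PosSemidef.mul_mul_conjTranspose_same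
  exact Matrix.posSemidef_diagonal_iff.mpr fun i => by simp [Real.sqrt_nonneg]

lemma Matrix.PosSemidef.sqrt_mul_self {n : ℕ} {A : Matrix (Fin n) (Fin n) ℝ}
    (hA : A.PosSemidef) : hA.sqrt * hA.sqrt = A := by
  unfold Matrix.PosSemidef.sqrt
  set U : Matrix (Fin n) (Fin n) ℝ := (hA.1.eigenvectorUnitary : Matrix (Fin n) (Fin n) ℝ) with hU
  have hUsU : star U * U = 1 := Matrix.mem_unitaryGroup_iff'.mp hA.1.eigenvectorUnitary.2
  have hspec : A = U * Matrix.diagonal hA.1.eigenvalues * star U := by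
    have := hA.1.spectral_theorem
    simpa [hU] using this
  have hd : diagonal ((↑) ∘ (√·) ∘ hA.1.eigenvalues : Fin n → ℝ) *
      diagonal ((↑) ∘ (√·) ∘ hA.1.eigenvalues : Fin n → ℝ) = diagonal hA.1.eigenvalues := by
    rw [diagonal_mul_diagonal]
    congr 1
    funext i
    simp [Real.mul_self_sqrt (hA.eigenvalues_nonneg i)]
  conv_rhs => rw [hspec, ← hd]
  calc U * diagonal ((↑) ∘ (√·) ∘ hA.1.eigenvalues : Fin n → ℝ) * star U *
        (U * diagonal ((↑) ∘ (√·) ∘ hA.1.eigenvalues : Fin n → ℝ) * star U)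
      = U * diagonal ((↑) ∘ (√·) ∘ hA.1.eigenvalues : Fin n → ℝ) * (star U * U) *
        diagonal ((↑) ∘ (√·) ∘ hA.1.eigenvalues : Fin n → ℝ) * star U := by
        simp only [Matrix.mul_assoc]
    _ = _ := by rw [hUsU, Matrix.mul_one]; simp only [Matrix.mul_assoc]


lemma exists_mul_of_range_le {m n p : ℕ} (M : Matrix (Fin m) (Fin n) ℝ)
    (N : Matrix (Fin m) (Fin p) ℝ)
    (h : LinearMap.range N.mulVecLin ≤ LinearMap.range M.mulVecLin) :
    ∃ X : Matrix (Fin n) (Fin p) ℝ, M * X = N := by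
  choose x hx using fun j => h (LinearMap.mem_range_self N.mulVecLin (Pi.single j 1))
  refine ⟨Matrix.of (fun i j => x j i), ?_⟩
  ext i j
  have h1 := congrFun (hx j) i
  simp only [Matrix.mulVecLin_apply, Matrix.mulVec_single_one] at h1
  simpa [Matrix.mul_apply, Matrix.mulVec, dotProduct] using h1

lemma aux_tendsto {n : ℕ} {B : Matrix (Fin n) (Fin n) ℝ} (hB : B.PosSemidef) :
    ∃ Q : Matrix (Fin n) (Fin n) ℝ,
      Tendsto (fun σ : ℝ => σ • (σ • (1 : Matrix (Fin n) (Fin n) ℝ) + B)⁻¹)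
        (𝓝[>] (0:ℝ)) (𝓝 Q) := by
  classical
  set U : Matrix (Fin n) (Fin n) ℝ := (hB.1.eigenvectorUnitary : Matrix (Fin n) (Fin n) ℝ) with hU
  set d : Fin n → ℝ := hB.1.eigenvalues with hd
  have hdnn : ∀ i, 0 ≤ d i := hB.eigenvalues_nonneg
  have hUU : U * star U = 1 := Matrix.mem_unitaryGroup_iff.mp hB.1.eigenvectorUnitary.2
  have hspec : B = U * Matrix.diagonal d * star U := by
    have := hB.1.spectral_theorem
    simpa [hU, hd] using this
  have hsum : ∀ σ : ℝ, σ • (1 : Matrix (Fin n) (Fin n) ℝ) + B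
      = U * Matrix.diagonal (fun i => σ + d i) * star U := by
    intro σ
    have h1 : σ • (1 : Matrix (Fin n) (Fin n) ℝ) = U * Matrix.diagonal (fun _ => σ) * star U := by
      rw [Matrix.smul_one_eq_diagonal]
      calc Matrix.diagonal (fun _ => σ)
          = (U * star U) * Matrix.diagonal (fun _ => σ) := by rw [hUU, one_mul]
        _ = U * Matrix.diagonal (fun _ => σ) * star U := by
            rw [mul_assoc, mul_assoc]
            congr 1
            ext i j
            simp [Matrix.diagonal, Matrix.mul_apply, Matrix.diagonal_apply, mul_comm]
    rw [h1, hspec]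
    have hda : (Matrix.diagonal fun i => σ + d i)
        = (Matrix.diagonal fun _ => σ) + Matrix.diagonal d := by
      rw [Matrix.diagonal_add]
    rw [hda, Matrix.mul_add, Matrix.add_mul]
  have hinv : ∀ σ : ℝ, 0 < σ →
      (σ • (1 : Matrix (Fin n) (Fin n) ℝ) + B)⁻¹
        = U * Matrix.diagonal (fun i => (σ + d i)⁻¹) * star U := by
    intro σ hσ
    apply Matrix.inv_eq_right_inv
    rw [hsum σ]
    have hUsU : star U * U = 1 := Matrix.mem_unitaryGroup_iff'.mp hB.1.eigenvectorUnitary.2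
    calc U * Matrix.diagonal (fun i => σ + d i) * star U *
          (U * Matrix.diagonal (fun i => (σ + d i)⁻¹) * star U)
        = U * Matrix.diagonal (fun i => σ + d i) * (star U * U) *
            Matrix.diagonal (fun i => (σ + d i)⁻¹) * star U := by
          simp only [mul_assoc]
      _ = U * (Matrix.diagonal (fun i => σ + d i) *
            Matrix.diagonal (fun i => (σ + d i)⁻¹)) * star U := by
          rw [hUsU]; simp only [mul_one, mul_assoc]
      _ = 1 := by
          rw [Matrix.diagonal_mul_diagonal]
          have : (fun i => (σ + d i) * (σ + d i)⁻¹) = fun _ => (1:ℝ) := by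
            funext i
            exact mul_inv_cancel₀ (by have := hdnn i; linarith)
          rw [this, Matrix.diagonal_one, mul_one, hUU]
  refine ⟨U * Matrix.diagonal (fun i => if d i = 0 then (1:ℝ) else 0) * star U, ?_⟩
  have hdiag : Tendsto (fun σ : ℝ => Matrix.diagonal (fun i => σ * (σ + d i)⁻¹))
      (𝓝[>] (0:ℝ)) (𝓝 (Matrix.diagonal (fun i => if d i = 0 then (1:ℝ) else 0))) := by
    apply tendsto_pi_nhds.mpr
    intro i
    apply tendsto_pi_nhds.mpr
    intro j
    by_cases hij : i = j
    · subst hij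
      simp only [Matrix.diagonal_apply_eq]
      by_cases h0 : d i = 0
      · simp only [h0, if_pos rfl, add_zero]
        apply Tendsto.congr' (f₁ := fun _ => (1:ℝ))
        · filter_upwards [self_mem_nhdsWithin] with σ hσ
          exact (mul_inv_cancel₀ (ne_of_gt hσ)).symm
        · exact tendsto_const_nhds
      · simp only [h0, if_neg h0]
        have hd0 : 0 < d i := lt_of_le_of_ne (hdnn i) (Ne.symm h0)
        have : Tendsto (fun σ : ℝ => σ * (σ + d i)⁻¹) (𝓝 (0:ℝ)) (𝓝 (0 * (0 + d i)⁻¹)) := by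
          exact tendsto_id.mul ((tendsto_id.add tendsto_const_nhds).inv₀ (by linarith))
        simpa using this.mono_left nhdsWithin_le_nhds
    · simp only [Matrix.diagonal_apply_ne _ hij]
      exact tendsto_const_nhds
  have hcont : Continuous (fun D : Matrix (Fin n) (Fin n) ℝ => U * D * star U) :=
    (continuous_const.matrix_mul continuous_id).matrix_mul continuous_const
  have := (hcont.tendsto _).comp hdiag
  apply Tendsto.congr' _ this
  filter_upwards [self_mem_nhdsWithin] with σ hσ
  simp only [Function.comp_apply]
  rw [hinv σ hσ]
  have hsm : σ • ((U * Matrix.diagonal (fun i => (σ + d i)⁻¹)) * star U)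
      = (U * (σ • Matrix.diagonal fun i => (σ + d i)⁻¹)) * star U := by
    simp [Matrix.mul_smul, Matrix.smul_mul]
  rw [hsm]
  congr 2
  ext i j
  by_cases hij : i = j
  · subst hij; simp [Matrix.diagonal_apply_eq, smul_eq_mul]
  · simp [Matrix.diagonal_apply_ne _ hij]

/-- If range(Σ_k) = range(Σ_m) and rank(Σ_m^{1/2}·Φᵀ·Φ·Σ_m^{1/2}) = rank(Σ_m),
then, with W_m(σ²) = Σ_m·Φᵀ·(σ²·I + Φ·Σ_m·Φᵀ)⁻¹,
tr(W_m(σ²)·(σ²·I + Φ·Σ_k·Φᵀ)·W_m(σ²)ᵀ) → tr(Σ_k) as σ² → 0⁺. -/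
theorem stmt_15 {n l : ℕ} (Sk Sm : Matrix (Fin n) (Fin n) ℝ)
    (hSk : Sk.PosSemidef) (hSm : Sm.PosSemidef)
    (hrange : LinearMap.range Sk.mulVecLin = LinearMap.range Sm.mulVecLin)
    (Φ : Matrix (Fin l) (Fin n) ℝ)
    (hrank : (hSm.sqrt * Φᵀ * Φ * hSm.sqrt).rank = Sm.rank)
    (W : ℝ → Matrix (Fin n) (Fin l) ℝ)
    (hW : ∀ σ2 : ℝ, W σ2 = Sm * Φᵀ * (σ2 • (1 : Matrix (Fin l) (Fin l) ℝ) + Φ * Sm * Φᵀ)⁻¹) :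
    Tendsto (fun σ2 : ℝ =>
        (W σ2 * (σ2 • (1 : Matrix (Fin l) (Fin l) ℝ) + Φ * Sk * Φᵀ) * (W σ2)ᵀ).trace)
      (nhdsWithin 0 (Set.Ioi 0)) (nhds Sk.trace) := by
  classical
  set S : Matrix (Fin n) (Fin n) ℝ := hSm.sqrt with hSdef
  have hSps : S.PosSemidef := hSm.posSemidef_sqrt
  have hSsym : Sᵀ = S := by
    have h := hSps.1
    rwa [Matrix.IsHermitian, Matrix.conjTranspose_eq_transpose_of_trivial] at h
  have hSS : S * S = Sm := hSm.sqrt_mul_self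
  set C : Matrix (Fin n) (Fin n) ℝ := Φᵀ * Φ with hCdef
  have hCsym : Cᵀ = C := by rw [hCdef, Matrix.transpose_mul, Matrix.transpose_transpose]
  set A : Matrix (Fin l) (Fin n) ℝ := Φ * S with hAdef
  have hAT : Aᵀ = S * Φᵀ := by rw [hAdef, Matrix.transpose_mul, hSsym]
  set B : Matrix (Fin n) (Fin n) ℝ := Aᵀ * A with hBdef
  have hBsym : Bᵀ = B := by
    rw [hBdef, Matrix.transpose_mul, Matrix.transpose_transpose]
  have hB : B.PosSemidef := by
    have h := Matrix.posSemidef_conjTranspose_mul_self A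
    rwa [Matrix.conjTranspose_eq_transpose_of_trivial] at h
  have hB2 : B = S * (C * S) := by
    rw [hBdef, hAT, hAdef, hCdef]
    simp only [Matrix.mul_assoc]
  have hB3 : B = hSm.sqrt * Φᵀ * Φ * hSm.sqrt := by
    rw [hB2, hCdef, ← hSdef]
    simp only [Matrix.mul_assoc]
  -- ranks and ranges
  have hrankSm : Sm.rank = S.rank := by
    conv_lhs => rw [← hSS]
    conv_lhs => rw [show S * S = Sᵀ * S by rw [hSsym]]
    exact Matrix.rank_transpose_mul_self S
  have hrankB : B.rank = S.rank := by rw [hB3, hrank, hrankSm]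
  have hrBS : LinearMap.range B.mulVecLin ≤ LinearMap.range S.mulVecLin := by
    rw [hB2, Matrix.mulVecLin_mul]
    exact LinearMap.range_comp_le_range _ _
  have hrSB : LinearMap.range S.mulVecLin ≤ LinearMap.range B.mulVecLin := by
    have heq : LinearMap.range B.mulVecLin = LinearMap.range S.mulVecLin :=
      Submodule.eq_of_le_of_finrank_le hrBS (le_of_eq hrankB.symm)
    exact le_of_eq heq.symm
  obtain ⟨X, hX⟩ : ∃ X, B * X = S := exists_mul_of_range_le B S hrSB
  have hXB : Xᵀ * B = S := by
    have h := congrArg Matrix.transpose hX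
    rwa [Matrix.transpose_mul, hBsym, hSsym] at h
  have hrSkS : LinearMap.range Sk.mulVecLin ≤ LinearMap.range S.mulVecLin := by
    rw [hrange, ← hSS, Matrix.mulVecLin_mul]
    exact LinearMap.range_comp_le_range _ _
  obtain ⟨Y, hY⟩ : ∃ Y, S * Y = Sk := exists_mul_of_range_le S Sk hrSkS
  -- analysis
  obtain ⟨Q, hQ⟩ := aux_tendsto hB
  have hσ0 : Tendsto (fun σ : ℝ => σ) (𝓝[>] (0:ℝ)) (𝓝 (0:ℝ)) :=
    tendsto_id.mono_left nhdsWithin_le_nhds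
  have hG : Tendsto (fun σ : ℝ =>
        Xᵀ - Xᵀ * (σ • (σ • (1 : Matrix (Fin n) (Fin n) ℝ) + B)⁻¹))
      (𝓝[>] (0:ℝ)) (𝓝 (Xᵀ - Xᵀ * Q)) :=
    tendsto_const_nhds.sub (tendsto_const_nhds.mul hQ)
  set R : Matrix (Fin n) (Fin n) ℝ := Xᵀ - Xᵀ * Q with hRdef
  have hGS : Tendsto (fun σ : ℝ =>
        (Xᵀ - Xᵀ * (σ • (σ • (1 : Matrix (Fin n) (Fin n) ℝ) + B)⁻¹)) * S)
      (𝓝[>] (0:ℝ)) (𝓝 (R * S)) := hG.mul tendsto_const_nhds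
  set L : Matrix (Fin n) (Fin n) ℝ := R * S with hLdef
  -- per-sigma facts
  have hMsym : ∀ σ : ℝ, ((σ • (1 : Matrix (Fin n) (Fin n) ℝ) + B)⁻¹)ᵀ
      = (σ • (1 : Matrix (Fin n) (Fin n) ℝ) + B)⁻¹ := by
    intro σ
    rw [Matrix.transpose_nonsing_inv]
    congr 1
    rw [Matrix.transpose_add, Matrix.transpose_smul, Matrix.transpose_one, hBsym]
  have hdetn : ∀ σ : ℝ, σ ∈ Set.Ioi (0:ℝ) →
      IsUnit (σ • (1 : Matrix (Fin n) (Fin n) ℝ) + B).det := by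
    intro σ hσ
    have hpd : (σ • (1 : Matrix (Fin n) (Fin n) ℝ) + B).PosDef := by
      apply Matrix.PosDef.add_posSemidef _ hB
      rw [Matrix.smul_one_eq_diagonal]
      exact Matrix.posDef_diagonal_iff.mpr fun i => hσ
    exact isUnit_iff_ne_zero.mpr hpd.det_pos.ne'
  have hBM : ∀ σ : ℝ, σ ∈ Set.Ioi (0:ℝ) →
      B * (σ • (1 : Matrix (Fin n) (Fin n) ℝ) + B)⁻¹
        = 1 - σ • (σ • (1 : Matrix (Fin n) (Fin n) ℝ) + B)⁻¹ := by
    intro σ hσ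
    have h1 := Matrix.mul_nonsing_inv _ (hdetn σ hσ)
    rw [Matrix.add_mul, Matrix.smul_mul, Matrix.one_mul] at h1
    rw [eq_sub_iff_add_eq, add_comm]
    exact h1
  have hMB : ∀ σ : ℝ, σ ∈ Set.Ioi (0:ℝ) →
      (σ • (1 : Matrix (Fin n) (Fin n) ℝ) + B)⁻¹ * B
        = 1 - σ • (σ • (1 : Matrix (Fin n) (Fin n) ℝ) + B)⁻¹ := by
    intro σ hσ
    have h1 := Matrix.nonsing_inv_mul _ (hdetn σ hσ)
    rw [Matrix.mul_add, Matrix.mul_smul, Matrix.mul_one] at h1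
    rw [eq_sub_iff_add_eq, add_comm]
    exact h1
  have hSM : ∀ σ : ℝ, σ ∈ Set.Ioi (0:ℝ) →
      S * (σ • (1 : Matrix (Fin n) (Fin n) ℝ) + B)⁻¹
        = Xᵀ - Xᵀ * (σ • (σ • (1 : Matrix (Fin n) (Fin n) ℝ) + B)⁻¹) := by
    intro σ hσ
    calc S * (σ • (1 : Matrix (Fin n) (Fin n) ℝ) + B)⁻¹
        = Xᵀ * (B * (σ • (1 : Matrix (Fin n) (Fin n) ℝ) + B)⁻¹) := by
          rw [← Matrix.mul_assoc, hXB]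
      _ = Xᵀ - Xᵀ * (σ • (σ • (1 : Matrix (Fin n) (Fin n) ℝ) + B)⁻¹) := by
          rw [hBM σ hσ, Matrix.mul_sub, Matrix.mul_one]
  have hSksym : Skᵀ = Sk := by
    have h := hSk.1
    rwa [Matrix.IsHermitian, Matrix.conjTranspose_eq_transpose_of_trivial] at h
  -- L is symmetric
  have hGSsym : ∀ σ : ℝ, σ ∈ Set.Ioi (0:ℝ) →
      ((Xᵀ - Xᵀ * (σ • (σ • (1 : Matrix (Fin n) (Fin n) ℝ) + B)⁻¹)) * S)ᵀ
        = (Xᵀ - Xᵀ * (σ • (σ • (1 : Matrix (Fin n) (Fin n) ℝ) + B)⁻¹)) * S := by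
    intro σ hσ
    rw [← hSM σ hσ, Matrix.transpose_mul, Matrix.transpose_mul, hSsym, hMsym σ,
      Matrix.mul_assoc]
  have hLsym : Lᵀ = L := by
    have t1 : Tendsto (fun σ : ℝ =>
        ((Xᵀ - Xᵀ * (σ • (σ • (1 : Matrix (Fin n) (Fin n) ℝ) + B)⁻¹)) * S)ᵀ)
        (𝓝[>] (0:ℝ)) (𝓝 Lᵀ) :=
      ((Continuous.matrix_transpose continuous_id).tendsto L).comp hGS
    have t2 : Tendsto (fun σ : ℝ =>
        ((Xᵀ - Xᵀ * (σ • (σ • (1 : Matrix (Fin n) (Fin n) ℝ) + B)⁻¹)) * S)ᵀ)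
        (𝓝[>] (0:ℝ)) (𝓝 L) := by
      apply hGS.congr'
      filter_upwards [self_mem_nhdsWithin] with σ hσ
      exact (hGSsym σ hσ).symm
    exact tendsto_nhds_unique t1 t2
  have hLCS : L * (C * S) = S := by
    have t1 : Tendsto (fun σ : ℝ =>
        ((Xᵀ - Xᵀ * (σ • (σ • (1 : Matrix (Fin n) (Fin n) ℝ) + B)⁻¹)) * S) * (C * S))
        (𝓝[>] (0:ℝ)) (𝓝 (L * (C * S))) := hGS.mul tendsto_const_nhds
    have t2 : Tendsto (fun σ : ℝ =>
        S - σ • (Xᵀ - Xᵀ * (σ • (σ • (1 : Matrix (Fin n) (Fin n) ℝ) + B)⁻¹)))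
        (𝓝[>] (0:ℝ)) (𝓝 (S - (0:ℝ) • R)) := tendsto_const_nhds.sub (hσ0.smul hG)
    rw [zero_smul, sub_zero] at t2
    have ev : ∀ σ : ℝ, σ ∈ Set.Ioi (0:ℝ) →
        ((Xᵀ - Xᵀ * (σ • (σ • (1 : Matrix (Fin n) (Fin n) ℝ) + B)⁻¹)) * S) * (C * S)
          = S - σ • (Xᵀ - Xᵀ * (σ • (σ • (1 : Matrix (Fin n) (Fin n) ℝ) + B)⁻¹)) := by
      intro σ hσ
      conv_lhs => rw [← hSM σ hσ]
      calc (S * (σ • (1 : Matrix (Fin n) (Fin n) ℝ) + B)⁻¹ * S) * (C * S)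
          = S * ((σ • (1 : Matrix (Fin n) (Fin n) ℝ) + B)⁻¹ * B) := by
            rw [hB2]; simp only [Matrix.mul_assoc]
        _ = S * (1 - σ • (σ • (1 : Matrix (Fin n) (Fin n) ℝ) + B)⁻¹) := by rw [hMB σ hσ]
        _ = S - σ • (S * (σ • (1 : Matrix (Fin n) (Fin n) ℝ) + B)⁻¹) := by
            rw [Matrix.mul_sub, Matrix.mul_one, Matrix.mul_smul]
        _ = S - σ • (Xᵀ - Xᵀ * (σ • (σ • (1 : Matrix (Fin n) (Fin n) ℝ) + B)⁻¹)) := by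
            rw [hSM σ hσ]
    have t3 : Tendsto (fun σ : ℝ =>
        ((Xᵀ - Xᵀ * (σ • (σ • (1 : Matrix (Fin n) (Fin n) ℝ) + B)⁻¹)) * S) * (C * S))
        (𝓝[>] (0:ℝ)) (𝓝 S) := by
      apply t2.congr'
      filter_upwards [self_mem_nhdsWithin] with σ hσ
      exact (ev σ hσ).symm
    exact tendsto_nhds_unique t1 t3
  have hLCSk : L * (C * Sk) = Sk := by
    conv_lhs => rw [← hY]
    rw [← Matrix.mul_assoc, ← Matrix.mul_assoc]
    rw [Matrix.mul_assoc L C S, hLCS, hY]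
  have hSkCL : Sk * (C * L) = Sk := by
    have h2 : (L * (C * Sk))ᵀ = Sk * (C * L) := by
      rw [Matrix.transpose_mul, Matrix.transpose_mul, hSksym, hCsym, hLsym,
        Matrix.mul_assoc]
    rw [← h2, hLCSk, hSksym]
  have hZ : L * (C * (Sk * (C * L))) = Sk := by
    calc L * (C * (Sk * (C * L))) = (L * (C * Sk)) * (C * L) := by
          simp only [Matrix.mul_assoc]
      _ = Sk := by rw [hLCSk, hSkCL]
  -- the main per-sigma identity
  have hstep : ∀ σ : ℝ, σ ∈ Set.Ioi (0:ℝ) →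
      W σ * (σ • (1 : Matrix (Fin l) (Fin l) ℝ) + Φ * Sk * Φᵀ) * (W σ)ᵀ
        = σ • ((Xᵀ - Xᵀ * (σ • (σ • (1 : Matrix (Fin n) (Fin n) ℝ) + B)⁻¹)) *
            (B * ((Xᵀ - Xᵀ * (σ • (σ • (1 : Matrix (Fin n) (Fin n) ℝ) + B)⁻¹)))ᵀ))
          + (Xᵀ - Xᵀ * (σ • (σ • (1 : Matrix (Fin n) (Fin n) ℝ) + B)⁻¹)) *
            (S * (C * (Sk * (C *
              ((Xᵀ - Xᵀ * (σ • (σ • (1 : Matrix (Fin n) (Fin n) ℝ) + B)⁻¹)) * S))))) := by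
    intro σ hσ
    have hcomm : Aᵀ * (σ • (1 : Matrix (Fin l) (Fin l) ℝ) + A * Aᵀ)
        = (σ • (1 : Matrix (Fin n) (Fin n) ℝ) + B) * Aᵀ := by
      rw [Matrix.mul_add, Matrix.add_mul, Matrix.mul_smul, Matrix.smul_mul, Matrix.mul_one,
        Matrix.one_mul, hBdef]
      congr 1
      exact (Matrix.mul_assoc _ _ _).symm
    have hdl : IsUnit (σ • (1 : Matrix (Fin l) (Fin l) ℝ) + A * Aᵀ).det := by
      have hpsd : (A * Aᵀ).PosSemidef := by
        have h := Matrix.posSemidef_self_mul_conjTranspose A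
        rwa [Matrix.conjTranspose_eq_transpose_of_trivial] at h
      have hone : (σ • (1 : Matrix (Fin l) (Fin l) ℝ)).PosDef := by
        rw [Matrix.smul_one_eq_diagonal]
        exact Matrix.posDef_diagonal_iff.mpr fun i => hσ
      have hpd := hone.add_posSemidef hpsd
      exact isUnit_iff_ne_zero.mpr hpd.det_pos.ne'
    have hpush : (σ • (1 : Matrix (Fin n) (Fin n) ℝ) + B)⁻¹ * Aᵀ
        = Aᵀ * (σ • (1 : Matrix (Fin l) (Fin l) ℝ) + A * Aᵀ)⁻¹ := by
      have h1 : (σ • (1 : Matrix (Fin l) (Fin l) ℝ) + A * Aᵀ) *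
          (σ • (1 : Matrix (Fin l) (Fin l) ℝ) + A * Aᵀ)⁻¹ = 1 := Matrix.mul_nonsing_inv _ hdl
      have h2 : (σ • (1 : Matrix (Fin n) (Fin n) ℝ) + B)⁻¹ *
          (σ • (1 : Matrix (Fin n) (Fin n) ℝ) + B) = 1 := Matrix.nonsing_inv_mul _ (hdetn σ hσ)
      calc (σ • (1 : Matrix (Fin n) (Fin n) ℝ) + B)⁻¹ * Aᵀ
          = (σ • (1 : Matrix (Fin n) (Fin n) ℝ) + B)⁻¹ * Aᵀ *
            ((σ • (1 : Matrix (Fin l) (Fin l) ℝ) + A * Aᵀ) *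
              (σ • (1 : Matrix (Fin l) (Fin l) ℝ) + A * Aᵀ)⁻¹) := by rw [h1, Matrix.mul_one]
        _ = (σ • (1 : Matrix (Fin n) (Fin n) ℝ) + B)⁻¹ *
            (Aᵀ * (σ • (1 : Matrix (Fin l) (Fin l) ℝ) + A * Aᵀ)) *
            (σ • (1 : Matrix (Fin l) (Fin l) ℝ) + A * Aᵀ)⁻¹ := by
              simp only [Matrix.mul_assoc]
        _ = (σ • (1 : Matrix (Fin n) (Fin n) ℝ) + B)⁻¹ *
            ((σ • (1 : Matrix (Fin n) (Fin n) ℝ) + B) * Aᵀ) *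
            (σ • (1 : Matrix (Fin l) (Fin l) ℝ) + A * Aᵀ)⁻¹ := by rw [hcomm]
        _ = Aᵀ * (σ • (1 : Matrix (Fin l) (Fin l) ℝ) + A * Aᵀ)⁻¹ := by
            rw [← Matrix.mul_assoc, h2, Matrix.one_mul]
    have hW1 : W σ = S * ((σ • (1 : Matrix (Fin n) (Fin n) ℝ) + B)⁻¹ * Aᵀ) := by
      rw [hW σ]
      have e1 : Φ * Sm * Φᵀ = A * Aᵀ := by
        rw [hAT, hAdef, ← hSS]
        simp only [Matrix.mul_assoc]
      have e2 : Sm * Φᵀ = S * Aᵀ := by rw [hAT, ← hSS, Matrix.mul_assoc]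
      rw [e1, e2, hpush, Matrix.mul_assoc]
    have hWT : (W σ)ᵀ = A * ((σ • (1 : Matrix (Fin n) (Fin n) ℝ) + B)⁻¹ * S) := by
      rw [hW1, Matrix.transpose_mul, Matrix.transpose_mul, Matrix.transpose_transpose,
        hSsym, hMsym σ, Matrix.mul_assoc]
    rw [hWT, hW1]
    conv_rhs => rw [← hSM σ hσ]
    rw [show (S * (σ • (1 : Matrix (Fin n) (Fin n) ℝ) + B)⁻¹)ᵀ
        = (σ • (1 : Matrix (Fin n) (Fin n) ℝ) + B)⁻¹ * S by
      rw [Matrix.transpose_mul, hMsym σ, hSsym]]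
    rw [hBdef, hAT, hAdef, hCdef]
    simp only [Matrix.mul_add, Matrix.add_mul, Matrix.mul_smul, Matrix.smul_mul,
      Matrix.mul_one, Matrix.one_mul, Matrix.mul_assoc]
  -- limits assembled
  have hGT : Tendsto (fun σ : ℝ =>
      (Xᵀ - Xᵀ * (σ • (σ • (1 : Matrix (Fin n) (Fin n) ℝ) + B)⁻¹))ᵀ)
      (𝓝[>] (0:ℝ)) (𝓝 Rᵀ) :=
    ((Continuous.matrix_transpose continuous_id).tendsto R).comp hG
  have h1 : Tendsto (fun σ : ℝ =>
      σ • ((Xᵀ - Xᵀ * (σ • (σ • (1 : Matrix (Fin n) (Fin n) ℝ) + B)⁻¹)) *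
        (B * ((Xᵀ - Xᵀ * (σ • (σ • (1 : Matrix (Fin n) (Fin n) ℝ) + B)⁻¹)))ᵀ)))
      (𝓝[>] (0:ℝ)) (𝓝 ((0:ℝ) • (R * (B * Rᵀ)))) :=
    hσ0.smul (hG.mul (tendsto_const_nhds.mul hGT))
  have h2 : Tendsto (fun σ : ℝ =>
      (Xᵀ - Xᵀ * (σ • (σ • (1 : Matrix (Fin n) (Fin n) ℝ) + B)⁻¹)) *
        (S * (C * (Sk * (C *
          ((Xᵀ - Xᵀ * (σ • (σ • (1 : Matrix (Fin n) (Fin n) ℝ) + B)⁻¹)) * S))))))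
      (𝓝[>] (0:ℝ)) (𝓝 (R * (S * (C * (Sk * (C * (R * S))))))) :=
    hG.mul (tendsto_const_nhds.mul (tendsto_const_nhds.mul
      (tendsto_const_nhds.mul (tendsto_const_nhds.mul hGS))))
  have hsum := h1.add h2
  rw [zero_smul, zero_add] at hsum
  have hlim : R * (S * (C * (Sk * (C * (R * S))))) = Sk := by
    have e1 : L * (C * (Sk * (C * L))) = R * (S * (C * (Sk * (C * (R * S))))) := by
      rw [hLdef, Matrix.mul_assoc]
    rw [← e1, hZ]
  rw [hlim] at hsum
  have htr : Tendsto (fun σ : ℝ =>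
      (σ • ((Xᵀ - Xᵀ * (σ • (σ • (1 : Matrix (Fin n) (Fin n) ℝ) + B)⁻¹)) *
        (B * ((Xᵀ - Xᵀ * (σ • (σ • (1 : Matrix (Fin n) (Fin n) ℝ) + B)⁻¹)))ᵀ))
        + (Xᵀ - Xᵀ * (σ • (σ • (1 : Matrix (Fin n) (Fin n) ℝ) + B)⁻¹)) *
          (S * (C * (Sk * (C *
            ((Xᵀ - Xᵀ * (σ • (σ • (1 : Matrix (Fin n) (Fin n) ℝ) + B)⁻¹)) * S)))))).trace)
      (𝓝[>] (0:ℝ)) (𝓝 Sk.trace) :=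
    ((Continuous.matrix_trace continuous_id).tendsto Sk).comp hsum
  apply htr.congr'
  filter_upwards [self_mem_nhdsWithin] with σ hσ
  exact (congrArg Matrix.trace (hstep σ hσ)).symm
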